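/- arXiv:1405.7205 — 4 statements merged into one kernel-verified Lean document; each statement's English description precedes it below -/
import Mathlib

section
/- Let m ≥ 2 and let z₁ ≥ z₂ ≥ ⋯ > 0 be a nonincreasing sequence with zⱼ ≤ j^{-(m-1)/(2m)} for all j. Then for every j ≥ 1, the sum over all 1 ≤ i₁ ≤ i₂ ≤ ⋯ ≤ i_{m-1} ≤ j of z_{i₁}²⋯z_{i_{m-1}}² is at most e^{m-1} · j^{(m-1)/m}. -/
open Finset

open Finset

private lemma aux_rpow_step {c : ℝ} (hc0 : 0 < c) (hc1 : c ≤ 1) {u : ℕ} (hu : 1 ≤ u) :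
    c * (u:ℝ) ^ (c - 1) ≤ (u:ℝ) ^ c - ((u:ℝ) - 1) ^ c := by
  have hu1 : (1:ℝ) ≤ (u:ℝ) := by exact_mod_cast hu
  have hup : (0:ℝ) < (u:ℝ) := by linarith
  have hinv : (1:ℝ)/u ≤ 1 := by
    rw [div_le_one hup]; exact hu1
  have hs : (-1:ℝ) ≤ -(1/(u:ℝ)) := by linarith
  have hb := rpow_one_add_le_one_add_mul_self hs hc0.le hc1
  have hnn : (0:ℝ) ≤ 1 + -(1/(u:ℝ)) := by linarith
  have heq : ((u:ℝ) - 1) ^ c = (u:ℝ)^c * (1 + -(1/(u:ℝ)))^c := by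
    rw [← Real.mul_rpow hup.le hnn]
    congr 1
    field_simp
    ring
  have h1 : ((u:ℝ) - 1) ^ c ≤ (u:ℝ)^c * (1 + c * -(1/(u:ℝ))) := by
    rw [heq]
    exact mul_le_mul_of_nonneg_left hb (Real.rpow_nonneg hup.le c)
  have h2 : (u:ℝ)^c * (1 + c * -(1/(u:ℝ))) = (u:ℝ)^c - c * (u:ℝ)^(c-1) := by
    rw [Real.rpow_sub hup, Real.rpow_one]
    field_simp
    ring
  linarith [h1, h2.symm.le]

private lemma sum_rpow_le {c : ℝ} (hc0 : 0 < c) (hc1 : c ≤ 1) (v : ℕ) :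
    ∑ u ∈ Icc 1 v, (u:ℝ) ^ (c - 1) ≤ (v:ℝ) ^ c / c := by
  induction v with
  | zero => simp [Real.zero_rpow hc0.ne']
  | succ v ih =>
    rw [Finset.sum_Icc_succ_top (by omega : 1 ≤ v + 1)]
    have hstep := aux_rpow_step hc0 hc1 (u := v + 1) (by omega)
    have hcast : ((v + 1 : ℕ):ℝ) - 1 = (v:ℝ) := by push_cast; ring
    rw [hcast] at hstep
    have h3 : ((v + 1 : ℕ):ℝ) ^ (c - 1) ≤ ((v + 1 : ℕ):ℝ) ^ c / c - (v:ℝ) ^ c / c := by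
      rw [← sub_div, le_div_iff₀ hc0]
      linarith
    linarith

private lemma sum_rec (w : ℕ → ℝ) (k v : ℕ) :
    ∑ i ∈ (Fintype.piFinset fun _ : Fin (k + 1) => Finset.Icc 1 v).filter
        (fun i => ∀ a b : Fin (k + 1), a ≤ b → i a ≤ i b), ∏ a, w (i a)
    = ∑ u ∈ Finset.Icc 1 v, w u *
        ∑ i ∈ (Fintype.piFinset fun _ : Fin k => Finset.Icc 1 u).filter
          (fun i => ∀ a b : Fin k, a ≤ b → i a ≤ i b), ∏ a, w (i a) := by
  simp_rw [Finset.mul_sum]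
  rw [Finset.sum_sigma']
  refine Finset.sum_bij' (fun i _ => ⟨i (Fin.last k), Fin.init i⟩)
    (fun p _ => Fin.snoc p.2 p.1) ?_ ?_ ?_ ?_ ?_
  · intro i hi
    rw [Finset.mem_filter, Fintype.mem_piFinset] at hi
    obtain ⟨h1, h2⟩ := hi
    rw [Finset.mem_sigma]
    constructor
    · exact h1 (Fin.last k)
    · rw [Finset.mem_filter, Fintype.mem_piFinset]
      constructor
      · intro a
        rw [Finset.mem_Icc]
        refine ⟨(Finset.mem_Icc.mp (h1 a.castSucc)).1, ?_⟩
        exact h2 a.castSucc (Fin.last k) (Fin.le_last _)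
      · intro a b hab
        exact h2 a.castSucc b.castSucc (by simpa using hab)
  · intro p hp
    rw [Finset.mem_sigma, Finset.mem_filter, Fintype.mem_piFinset] at hp
    obtain ⟨hu, ⟨h1, h2⟩⟩ := hp
    rw [Finset.mem_filter, Fintype.mem_piFinset]
    have key : ∀ x : Fin (k + 1), (Fin.snoc p.snd p.fst : Fin (k + 1) → ℕ) x ≤ p.fst := by
      intro x
      rcases Fin.eq_castSucc_or_eq_last x with ⟨x', rfl⟩ | rfl
      · rw [Fin.snoc_castSucc]
        exact (Finset.mem_Icc.mp (h1 x')).2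
      · rw [Fin.snoc_last]
    constructor
    · intro a
      rw [Finset.mem_Icc]
      have h4 := Finset.mem_Icc.mp hu
      refine ⟨?_, le_trans (key a) h4.2⟩
      rcases Fin.eq_castSucc_or_eq_last a with ⟨a', rfl⟩ | rfl
      · rw [Fin.snoc_castSucc]
        exact (Finset.mem_Icc.mp (h1 a')).1
      · rw [Fin.snoc_last]; exact h4.1
    · intro a b hab
      rcases Fin.eq_castSucc_or_eq_last b with ⟨b', rfl⟩ | rfl
      · rcases Fin.eq_castSucc_or_eq_last a with ⟨a', rfl⟩ | rfl
        · rw [Fin.snoc_castSucc, Fin.snoc_castSucc]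
          exact h2 a' b' (by simpa using hab)
        · exact absurd hab (not_le.mpr (Fin.castSucc_lt_last b'))
      · rw [Fin.snoc_last]
        exact key a
  · intro i hi
    exact Fin.snoc_init_self i
  · intro p hp
    ext
    · simp
    · simp [Fin.init_snoc]
  · intro i hi
    rw [Fin.prod_univ_castSucc]
    simp [Fin.init]
    ring

private lemma main_bound (m : ℕ) (hm : 2 ≤ m) :
    ∀ k, k ≤ m - 1 → ∀ v : ℕ, 1 ≤ v →
    ∑ i ∈ (Fintype.piFinset fun _ : Fin k => Finset.Icc 1 v).filter
        (fun i => ∀ a b : Fin k, a ≤ b → i a ≤ i b),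
      ∏ a, ((i a : ℝ)) ^ (-(((m:ℝ) - 1) / m))
    ≤ ((m:ℝ) ^ k / k.factorial) * (v:ℝ) ^ ((k:ℝ) / m) := by
  have hm0 : (0:ℝ) < m := by positivity
  intro k
  induction k with
  | zero =>
    intro _ v hv
    have hv0 : (0:ℝ) < v := by exact_mod_cast hv
    simp [Real.rpow_natCast]
  | succ k ih =>
    intro hk v hv
    have hrec := sum_rec (fun n => (n:ℝ) ^ (-(((m:ℝ) - 1) / m))) k v
    rw [hrec]
    have hk' : k ≤ m - 1 := by omega
    have hkm : (k:ℝ) + 1 ≤ m := by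
      have : k + 1 ≤ m := by omega
      exact_mod_cast this
    set c : ℝ := ((k:ℝ) + 1) / m with hc
    have hc0 : 0 < c := by positivity
    have hc1 : c ≤ 1 := by
      rw [hc, div_le_one hm0]; exact hkm
    have hCpos : (0:ℝ) ≤ (m:ℝ) ^ k / k.factorial := by positivity
    calc ∑ u ∈ Finset.Icc 1 v, (u:ℝ) ^ (-(((m:ℝ) - 1) / m)) *
            ∑ i ∈ (Fintype.piFinset fun _ : Fin k => Finset.Icc 1 u).filter
              (fun i => ∀ a b : Fin k, a ≤ b → i a ≤ i b), ∏ a, ((i a : ℝ)) ^ (-(((m:ℝ) - 1) / m))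
        ≤ ∑ u ∈ Finset.Icc 1 v, ((m:ℝ) ^ k / k.factorial) * (u:ℝ) ^ (c - 1) := by
          refine Finset.sum_le_sum fun u hu => ?_
          have hu1 : 1 ≤ u := (Finset.mem_Icc.mp hu).1
          have hu0 : (0:ℝ) < u := by exact_mod_cast hu1
          have h1 := ih hk' u hu1
          have h2 : (u:ℝ) ^ (-(((m:ℝ) - 1) / m)) * (((m:ℝ) ^ k / k.factorial) * (u:ℝ) ^ ((k:ℝ) / m))
              = ((m:ℝ) ^ k / k.factorial) * (u:ℝ) ^ (c - 1) := by
            rw [mul_comm ((u:ℝ) ^ (-(((m:ℝ) - 1) / m))), mul_assoc, ← Real.rpow_add hu0]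
            congr 2
            rw [hc]
            field_simp
            ring
          rw [← h2]
          exact mul_le_mul_of_nonneg_left h1 (Real.rpow_nonneg hu0.le _)
      _ = ((m:ℝ) ^ k / k.factorial) * ∑ u ∈ Finset.Icc 1 v, (u:ℝ) ^ (c - 1) := by
          rw [Finset.mul_sum]
      _ ≤ ((m:ℝ) ^ k / k.factorial) * ((v:ℝ) ^ c / c) :=
          mul_le_mul_of_nonneg_left (sum_rpow_le hc0 hc1 v) hCpos
      _ = ((m:ℝ) ^ (k + 1) / (k + 1).factorial) * (v:ℝ) ^ (((k:ℕ) + 1 : ℝ) / m) := by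
          rw [hc, Nat.factorial_succ]
          push_cast
          have hk1 : ((k:ℝ) + 1) ≠ 0 := by positivity
          have hf : ((k.factorial : ℝ)) ≠ 0 := by positivity
          field_simp
          ring
      _ = ((m:ℝ) ^ (k + 1) / (k + 1).factorial) * (v:ℝ) ^ (((k + 1 : ℕ) : ℝ) / m) := by
          norm_num

private lemma pow_le_exp_factorial : ∀ n : ℕ, ((n:ℝ) + 1) ^ n ≤ Real.exp 1 ^ n * n.factorial := by
  intro n
  induction n with
  | zero => simp
  | succ n ih =>
    have hn1 : (0:ℝ) < (n:ℝ) + 1 := by positivity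
    have hb : ((n:ℝ) + 2) ≤ Real.exp (1 / ((n:ℝ) + 1)) * ((n:ℝ) + 1) := by
      have h := Real.add_one_le_exp (1 / ((n:ℝ) + 1))
      have h2 := mul_le_mul_of_nonneg_right h hn1.le
      have h3 : (1 / ((n:ℝ) + 1) + 1) * ((n:ℝ) + 1) = (n:ℝ) + 2 := by
        field_simp
        ring
      linarith
    have h2 : ((n:ℝ) + 2) ^ (n + 1) ≤ (Real.exp (1 / ((n:ℝ) + 1)) * ((n:ℝ) + 1)) ^ (n + 1) :=
      pow_le_pow_left₀ (by positivity) hb (n + 1)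
    rw [mul_pow] at h2
    have h3 : Real.exp (1 / ((n:ℝ) + 1)) ^ (n + 1) = Real.exp 1 := by
      rw [← Real.exp_nat_mul]
      congr 1
      field_simp
      norm_num
    rw [h3] at h2
    have h4 : ((n:ℝ) + 1) ^ (n + 1) = ((n:ℝ) + 1) * ((n:ℝ) + 1) ^ n := by ring
    have h5 : Real.exp 1 * ((n:ℝ) + 1) ^ (n + 1)
        ≤ Real.exp 1 * (((n:ℝ) + 1) * (Real.exp 1 ^ n * n.factorial)) := by
      rw [h4]
      refine mul_le_mul_of_nonneg_left ?_ (Real.exp_pos 1).le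
      exact mul_le_mul_of_nonneg_left ih hn1.le
    have h6 : Real.exp 1 * (((n:ℝ) + 1) * (Real.exp 1 ^ n * n.factorial))
        = Real.exp 1 ^ (n + 1) * (n + 1).factorial := by
      rw [Nat.factorial_succ, pow_succ]
      push_cast
      ring
    push_cast
    calc ((n:ℝ) + 1 + 1) ^ (n + 1) = ((n:ℝ) + 2) ^ (n + 1) := by ring_nf
      _ ≤ Real.exp 1 * ((n:ℝ) + 1) ^ (n + 1) := h2
      _ ≤ Real.exp 1 ^ (n + 1) * ((n:ℕ) + 1).factorial := by
          rw [← h6] at *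
          push_cast
          linarith [h5]


/-- For `m ≥ 2` and a nonincreasing positive sequence `z` with
`zⱼ ≤ j^{-(m-1)/(2m)}`, the sum over nondecreasing `(m-1)`-tuples
`1 ≤ i₁ ≤ ⋯ ≤ i_{m-1} ≤ j` of `z_{i₁}²⋯z_{i_{m-1}}²` is at most
`e^{m-1} · j^{(m-1)/m}`. -/
theorem stmt_3 (m : ℕ) (hm : 2 ≤ m) (z : ℕ → ℝ)
    (hpos : ∀ j, 1 ≤ j → 0 < z j)
    (hmono : ∀ j k, 1 ≤ j → j ≤ k → z k ≤ z j)
    (hbound : ∀ j : ℕ, 1 ≤ j → z j ≤ (j : ℝ) ^ (-(((m : ℝ) - 1) / (2 * m)))) :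
    ∀ j : ℕ, 1 ≤ j →
      ∑ i ∈ (Fintype.piFinset fun _ : Fin (m - 1) => Finset.Icc 1 j).filter
          (fun i => ∀ a b : Fin (m - 1), a ≤ b → i a ≤ i b),
        ∏ a, z (i a) ^ 2
      ≤ Real.exp ((m : ℝ) - 1) * (j : ℝ) ^ (((m : ℝ) - 1) / m) := by
  intro j hj
  have hm0 : (0:ℝ) < m := by positivity
  have hmR : (2:ℝ) ≤ m := by exact_mod_cast hm
  have hcast : ((m - 1 : ℕ):ℝ) = (m:ℝ) - 1 := by
    have h1 : 1 ≤ m := by omega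
    push_cast [Nat.cast_sub h1]
    ring
  have hterm : ∀ i ∈ (Fintype.piFinset fun _ : Fin (m - 1) => Finset.Icc 1 j).filter
      (fun i => ∀ a b : Fin (m - 1), a ≤ b → i a ≤ i b),
      ∏ a, z (i a) ^ 2 ≤ ∏ a, ((i a : ℝ)) ^ (-(((m:ℝ) - 1) / m)) := by
    intro i hi
    rw [Finset.mem_filter, Fintype.mem_piFinset] at hi
    refine Finset.prod_le_prod (fun a _ => sq_nonneg _) (fun a _ => ?_)
    have h1 : 1 ≤ i a := (Finset.mem_Icc.mp (hi.1 a)).1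
    have hb := hbound (i a) h1
    have hx0 : (0:ℝ) < (i a : ℝ) := by exact_mod_cast h1
    calc z (i a) ^ 2 ≤ ((i a : ℝ) ^ (-(((m:ℝ) - 1) / (2 * m)))) ^ 2 :=
          pow_le_pow_left₀ (hpos (i a) h1).le hb 2
      _ = (i a : ℝ) ^ (-(((m:ℝ) - 1) / m)) := by
          rw [← Real.rpow_natCast ((i a : ℝ) ^ (-(((m:ℝ) - 1) / (2 * m)))) 2,
            ← Real.rpow_mul hx0.le]
          congr 1
          push_cast
          field_simp
  calc ∑ i ∈ (Fintype.piFinset fun _ : Fin (m - 1) => Finset.Icc 1 j).filter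
          (fun i => ∀ a b : Fin (m - 1), a ≤ b → i a ≤ i b), ∏ a, z (i a) ^ 2
      ≤ ∑ i ∈ (Fintype.piFinset fun _ : Fin (m - 1) => Finset.Icc 1 j).filter
          (fun i => ∀ a b : Fin (m - 1), a ≤ b → i a ≤ i b),
          ∏ a, ((i a : ℝ)) ^ (-(((m:ℝ) - 1) / m)) := Finset.sum_le_sum hterm
    _ ≤ ((m:ℝ) ^ (m - 1) / (m - 1).factorial) * (j:ℝ) ^ (((m - 1 : ℕ):ℝ) / m) :=
          main_bound m hm (m - 1) le_rfl j hj
    _ ≤ Real.exp ((m:ℝ) - 1) * (j:ℝ) ^ (((m:ℝ) - 1) / m) := by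
          rw [hcast]
          refine mul_le_mul_of_nonneg_right ?_ (Real.rpow_nonneg (by positivity) _)
          have hp := pow_le_exp_factorial (m - 1)
          have hm1 : ((m - 1 : ℕ):ℝ) + 1 = (m:ℝ) := by rw [hcast]; ring
          rw [hm1] at hp
          have hexp : Real.exp 1 ^ (m - 1) = Real.exp ((m:ℝ) - 1) := by
            rw [← Real.exp_nat_mul, mul_one, hcast]
          rw [div_le_iff₀ (by positivity)]
          calc (m:ℝ) ^ (m - 1) ≤ Real.exp 1 ^ (m - 1) * (m - 1).factorial := hp
            _ = Real.exp ((m:ℝ) - 1) * (m - 1).factorial := by rw [hexp]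
end

section
/- Suppose a sequence space X (a vector subspace of ℂ^ℕ) satisfies mon H_∞(B_{ℓ∞}) = X ∩ B_{ℓ∞}, where mon H_∞(B_{ℓ∞}) contains every sequence z with limsup_n (1/log n) ∑_{j=1}^n (z*ⱼ)² < 1 and is contained in the set of z with limsup_n (1/log n) ∑_{j=1}^n (z*ⱼ)² ≤ 1. Then a contradiction follows; i.e., no such vector space X exists. -/
open Filter Topology

/-- The decreasing rearrangement of a sequence: `decreasingRearrangement z n` is the
`(n+1)`-st term `z*_{n+1}`, i.e. the infimum over finite sets `J` of cardinality `≤ n`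
of the supremum of `|z j|` for `j ∉ J`. -/
noncomputable def decreasingRearrangement (z : ℕ → ℂ) (n : ℕ) : ℝ :=
  ⨅ J : {J : Finset ℕ // J.card ≤ n}, ⨆ j : {j : ℕ // j ∉ J.1}, ‖z j‖

/-- The open unit ball of `ℓ∞`: sequences with supremum norm `< 1`. -/
def ballLinfty : Set (ℕ → ℂ) := {z | ∃ r < (1 : ℝ), ∀ n, ‖z n‖ ≤ r}

lemma decRear_eq (f : ℕ → ℝ) (hmono : Antitone f) (hpos : ∀ n, 0 ≤ f n) (n : ℕ) :
    decreasingRearrangement (fun k => (f k : ℂ)) n = f n := by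
  have habs : ∀ j : ℕ, ‖((f j : ℂ))‖ = f j := fun j => by
    rw [Complex.norm_real, Real.norm_of_nonneg (hpos j)]
  have hbdd : ∀ J : Finset ℕ, BddAbove (Set.range fun j : {j : ℕ // j ∉ J} => f j) :=
    fun J => ⟨f 0, by rintro x ⟨j, rfl⟩; exact hmono (Nat.zero_le _)⟩
  have hne : ∀ J : {J : Finset ℕ // J.card ≤ n}, ∃ j, j ≤ n ∧ j ∉ J.1 := by
    intro J
    by_contra h
    push_neg at h
    have hsub : Finset.range (n + 1) ⊆ J.1 := by
      intro j hj
      exact h j (Nat.lt_succ_iff.mp (Finset.mem_range.mp hj))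
    have := Finset.card_le_card hsub
    simp only [Finset.card_range] at this
    omega
  have hnon : ∀ J : Finset ℕ, Nonempty {j : ℕ // j ∉ J} := fun J => by
    obtain ⟨j, hj⟩ := Infinite.exists_notMem_finset J
    exact ⟨⟨j, hj⟩⟩
  haveI : Nonempty {J : Finset ℕ // J.card ≤ n} := ⟨⟨∅, by simp⟩⟩
  haveI := hnon (Finset.range n)
  unfold decreasingRearrangement
  simp only [habs]
  apply le_antisymm
  · have hsup : (⨆ j : {j : ℕ // j ∉ Finset.range n}, f j) = f n := by
      apply le_antisymm
      · exact ciSup_le fun j => hmono (by simpa [Finset.mem_range, not_lt] using j.2)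
      · exact le_ciSup (hbdd _) ⟨n, by simp⟩
    have hlb : BddBelow (Set.range fun J : {J : Finset ℕ // J.card ≤ n} =>
        ⨆ j : {j : ℕ // j ∉ J.1}, f j) := by
      refine ⟨0, ?_⟩
      rintro x ⟨J, rfl⟩
      obtain ⟨j, -, hjJ⟩ := hne J
      exact le_trans (hpos j) (le_ciSup (hbdd _) ⟨j, hjJ⟩)
    calc (⨅ J : {J : Finset ℕ // J.card ≤ n}, ⨆ j : {j : ℕ // j ∉ J.1}, f j)
        ≤ ⨆ j : {j : ℕ // j ∉ Finset.range n}, f j :=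
          ciInf_le hlb ⟨Finset.range n, by simp⟩
      _ = f n := hsup
  · apply le_ciInf
    intro J
    haveI := hnon J.1
    obtain ⟨j, hjn, hjJ⟩ := hne J
    exact le_trans (hmono hjn) (le_ciSup (hbdd _) ⟨j, hjJ⟩)

lemma log_shift_tendsto : Tendsto (fun n : ℕ => Real.log ((n : ℝ) + 4) - Real.log n)
    atTop (𝓝 0) := by
  have h1 : Tendsto (fun n : ℕ => 1 + 4 / (n : ℝ)) atTop (𝓝 1) := by
    have := (tendsto_const_div_atTop_nhds_zero_nat (4 : ℝ)).const_add 1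
    simpa using this
  have h2 : Tendsto (fun n : ℕ => Real.log (1 + 4 / (n : ℝ))) atTop (𝓝 0) := by
    have := (Real.continuousAt_log one_ne_zero).tendsto.comp h1
    simpa [Function.comp_def] using this
  apply h2.congr'
  filter_upwards [eventually_ge_atTop 1] with n hn
  have hn' : (0 : ℝ) < n := by exact_mod_cast hn
  rw [show (1 : ℝ) + 4 / n = ((n : ℝ) + 4) / n by field_simp,
    Real.log_div (by positivity) hn'.ne']

lemma harmonic_shift_tendsto : Tendsto (fun n : ℕ => ((harmonic (n + 3) : ℚ) : ℝ) - Real.log n)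
    atTop (𝓝 Real.eulerMascheroniConstant) := by
  have h1 := Real.tendsto_harmonic_sub_log_add_one.comp (tendsto_add_atTop_nat 3)
  have h2 := h1.add log_shift_tendsto
  rw [add_zero] at h2
  apply h2.congr
  intro n
  simp only [Function.comp_apply]
  push_cast
  ring

lemma tendsto_main (c : ℝ) :
    Tendsto (fun n : ℕ => (1 / Real.log n) *
      ∑ j ∈ Finset.range n, (c / Real.sqrt ((j : ℝ) + 4)) ^ 2) atTop (𝓝 (c ^ 2)) := by
  have hsum : ∀ n : ℕ, ∑ j ∈ Finset.range n, (c / Real.sqrt ((j : ℝ) + 4)) ^ 2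
      = c ^ 2 * (((harmonic (n + 3) : ℚ) : ℝ) - ((harmonic 3 : ℚ) : ℝ)) := by
    intro n
    induction n with
    | zero => simp
    | succ n ih =>
      rw [Finset.sum_range_succ, ih]
      have h4 : (0 : ℝ) < (n : ℝ) + 4 := by positivity
      rw [div_pow, Real.sq_sqrt h4.le]
      have : harmonic (n + 1 + 3) = harmonic (n + 3) + ((n : ℚ) + 4)⁻¹ := by
        rw [show n + 1 + 3 = (n + 3) + 1 by ring, harmonic_succ]
        push_cast
        ring_nf
      rw [this]
      push_cast
      field_simp
      ring
  have hinv : Tendsto (fun n : ℕ => 1 / Real.log n) atTop (𝓝 0) := by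
    have := (Real.tendsto_log_atTop.comp tendsto_natCast_atTop_atTop).inv_tendsto_atTop
    simpa [one_div, Function.comp_def, Pi.inv_def] using this
  have key : Tendsto (fun n : ℕ => c ^ 2 * ((((harmonic (n + 3) : ℚ) : ℝ) - Real.log n
      - ((harmonic 3 : ℚ) : ℝ)) * (1 / Real.log n)) + c ^ 2) atTop (𝓝 (c ^ 2)) := by
    have h1 := ((harmonic_shift_tendsto.sub_const ((harmonic 3 : ℚ) : ℝ)).mul hinv).const_mul
      (c ^ 2)
    have h2 := h1.add_const (c ^ 2)
    simpa using h2
  apply key.congr'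
  filter_upwards [eventually_ge_atTop 2] with n hn
  have hn1 : (1 : ℝ) < n := by
    have : (2 : ℝ) ≤ n := by exact_mod_cast hn
    linarith
  have hlog : Real.log n ≠ 0 := (Real.log_pos hn1).ne'
  rw [hsum n]
  field_simp
  ring

lemma zseq_mem_ball (c : ℝ) (hc : 0 ≤ c) (hc1 : c < 2) :
    (fun n : ℕ => ((c / Real.sqrt ((n : ℝ) + 4) : ℝ) : ℂ)) ∈ ballLinfty := by
  refine ⟨c / 2, by linarith, fun n => ?_⟩
  have h4 : (4 : ℝ) ≤ (n : ℝ) + 4 := by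
    have : (0 : ℝ) ≤ n := Nat.cast_nonneg n
    linarith
  have hs : (2 : ℝ) ≤ Real.sqrt ((n : ℝ) + 4) := by
    rw [show (2 : ℝ) = Real.sqrt 4 by rw [show (4:ℝ) = 2^2 by norm_num, Real.sqrt_sq]; norm_num]
    exact Real.sqrt_le_sqrt h4
  rw [Complex.norm_real, Real.norm_of_nonneg (by positivity)]
  apply div_le_div_of_nonneg_left hc (by norm_num) hs

lemma zseq_antitone (c : ℝ) (hc : 0 ≤ c) :
    Antitone (fun n : ℕ => c / Real.sqrt ((n : ℝ) + 4)) := by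
  intro m n hmn
  have h1 : (0 : ℝ) < Real.sqrt ((m : ℝ) + 4) := Real.sqrt_pos.mpr (by positivity)
  apply div_le_div_of_nonneg_left hc h1
  apply Real.sqrt_le_sqrt
  have : (m : ℝ) ≤ n := by exact_mod_cast hmn
  linarith

lemma zseq_limsup (c : ℝ) (hc : 0 ≤ c) :
    limsup (fun n : ℕ => (1 / Real.log n) * ∑ j ∈ Finset.range n,
      decreasingRearrangement (fun k : ℕ => ((c / Real.sqrt ((k : ℝ) + 4) : ℝ) : ℂ)) j ^ 2)
      atTop = c ^ 2 := by
  have hrw : ∀ j : ℕ, decreasingRearrangement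
      (fun k : ℕ => ((c / Real.sqrt ((k : ℝ) + 4) : ℝ) : ℂ)) j = c / Real.sqrt ((j : ℝ) + 4) :=
    decRear_eq _ (zseq_antitone c hc) (fun n => by positivity)
  simp only [hrw]
  exact (tendsto_main c).limsup_eq

/-- There is no vector subspace `X` of `ℂ^ℕ` with
`mon H_∞(B_{ℓ∞}) = X ∩ B_{ℓ∞}`, where `mon H_∞(B_{ℓ∞})` contains every `z ∈ B_{ℓ∞}`
with `limsup (1/log n) ∑_{j=1}^n (z*ⱼ)² < 1` and is contained in the set of those `z`
with `limsup (1/log n) ∑_{j=1}^n (z*ⱼ)² ≤ 1`. -/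
theorem stmt_4 (X : Submodule ℂ (ℕ → ℂ)) (mon : Set (ℕ → ℂ))
    (hlow : ∀ z : ℕ → ℂ, z ∈ ballLinfty →
      limsup (fun n : ℕ =>
        (1 / Real.log n) * ∑ j ∈ Finset.range n, decreasingRearrangement z j ^ 2)
        atTop < 1 → z ∈ mon)
    (hup : ∀ z ∈ mon,
      limsup (fun n : ℕ =>
        (1 / Real.log n) * ∑ j ∈ Finset.range n, decreasingRearrangement z j ^ 2)
        atTop ≤ 1)
    (heq : mon = (X : Set (ℕ → ℂ)) ∩ ballLinfty) :
    False := by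
  set y : ℕ → ℂ := fun n : ℕ => (((1 / 2 : ℝ) / Real.sqrt ((n : ℝ) + 4) : ℝ) : ℂ) with hy
  set w : ℕ → ℂ := fun n : ℕ => (((3 / 2 : ℝ) / Real.sqrt ((n : ℝ) + 4) : ℝ) : ℂ) with hw
  have hymem : y ∈ mon := by
    apply hlow y (zseq_mem_ball (1 / 2) (by norm_num) (by norm_num))
    rw [zseq_limsup (1 / 2) (by norm_num)]
    norm_num
  have hyX : y ∈ X := by
    rw [heq] at hymem
    exact hymem.1
  have hwX : w ∈ X := by
    have := X.smul_mem (3 : ℂ) hyX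
    convert this using 1
    funext n
    simp only [hw, hy, Pi.smul_apply, smul_eq_mul]
    push_cast
    ring
  have hwball : w ∈ ballLinfty := zseq_mem_ball (3 / 2) (by norm_num) (by norm_num)
  have hwmem : w ∈ mon := by rw [heq]; exact ⟨hwX, hwball⟩
  have := hup w hwmem
  rw [zseq_limsup (3 / 2) (by norm_num)] at this
  norm_num at this
end

section
/- For every m ≥ 1, every z ∈ ℓ₂, and every f ∈ H₂^m(𝕋^∞) (the m-homogeneous part of the Hardy space), one has ∑_{|α| = m} |f̂(α) z^α| ≤ ‖z‖₂^m · ‖f‖₂. In particular ℓ₂ ⊆ mon H₂^m(𝕋^∞). -/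
open MeasureTheory

noncomputable instance : MeasurableSpace Circle := borel Circle
instance : BorelSpace Circle := ⟨rfl⟩

/-- The `α`-th Fourier coefficient of `f : 𝕋^∞ → ℂ` with respect to the Haar
probability measure `μ`: `f̂(α) = ∫ f(w) w^{-α} dμ(w)`. -/
noncomputable def fourierCoeffInfty (μ : Measure (ℕ → Circle))
    (f : (ℕ → Circle) → ℂ) (α : ℕ →₀ ℤ) : ℂ :=
  ∫ w, f w * α.prod (fun n k => ((w n : ℂ)) ^ (-k)) ∂μ

namespace Stmt12

open scoped ENNReal NNReal ComplexConjugate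

/-! ### Characters of the infinite torus -/

noncomputable def charFun (γ : ℕ →₀ ℤ) (w : ℕ → Circle) : Circle :=
  γ.prod fun n k => w n ^ k

noncomputable def eChar (γ : ℕ →₀ ℤ) (w : ℕ → Circle) : ℂ := (charFun γ w : ℂ)

lemma circle_coe_zpow (x : Circle) (k : ℤ) : ((x ^ k : Circle) : ℂ) = (x : ℂ) ^ k := by
  cases k with
  | ofNat n => simp [zpow_natCast, ← SubmonoidClass.coe_pow]
  | negSucc n => simp [zpow_negSucc, ← SubmonoidClass.coe_pow]

lemma continuous_charFun (γ : ℕ →₀ ℤ) : Continuous (charFun γ) := by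
  unfold charFun Finsupp.prod
  exact continuous_finset_prod _ fun n _ => (continuous_zpow (γ n)).comp (continuous_apply n)

lemma continuous_eChar (γ : ℕ →₀ ℤ) : Continuous (eChar γ) :=
  continuous_subtype_val.comp (continuous_charFun γ)

lemma charFun_zero (w : ℕ → Circle) : charFun 0 w = 1 := Finsupp.prod_zero_index

lemma charFun_mul (γ : ℕ →₀ ℤ) (g w : ℕ → Circle) :
    charFun γ (g * w) = charFun γ g * charFun γ w := by
  unfold charFun Finsupp.prod
  rw [← Finset.prod_mul_distrib]
  exact Finset.prod_congr rfl fun n _ => by simp [mul_zpow]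

lemma charFun_add (β γ : ℕ →₀ ℤ) (w : ℕ → Circle) :
    charFun (β + γ) w = charFun β w * charFun γ w :=
  Finsupp.prod_add_index' (fun _ => zpow_zero _) (fun _ _ _ => zpow_add _ _ _)

lemma charFun_sub (β γ : ℕ →₀ ℤ) (w : ℕ → Circle) :
    charFun (β - γ) w = charFun β w * (charFun γ w)⁻¹ := by
  have := charFun_add (β - γ) γ w
  rw [sub_add_cancel] at this
  rw [this]; group

lemma inv_charFun (γ : ℕ →₀ ℤ) (w : ℕ → Circle) :
    (((charFun γ w)⁻¹ : Circle) : ℂ) = γ.prod fun n k => ((w n : ℂ)) ^ (-k) := by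
  have h : (charFun γ w)⁻¹ = γ.prod fun n k => w n ^ (-k) := by
    unfold charFun Finsupp.prod
    rw [← Finset.prod_inv_distrib]
    exact Finset.prod_congr rfl fun n _ => (zpow_neg _ _).symm
  rw [h, show ((γ.prod fun n k => w n ^ (-k) : Circle) : ℂ)
      = Circle.coeHom (γ.prod fun n k => w n ^ (-k)) from rfl, map_finsuppProd]
  exact Finsupp.prod_congr fun n _ => circle_coe_zpow _ _

lemma conj_eChar (γ : ℕ →₀ ℤ) (w : ℕ → Circle) :
    (starRingEnd ℂ) (eChar γ w) = (((charFun γ w)⁻¹ : Circle) : ℂ) := by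
  rw [Circle.coe_inv_eq_conj]; rfl

variable (μ : Measure (ℕ → Circle)) [μ.IsHaarMeasure] [IsProbabilityMeasure μ]

lemma memℒp_eChar (γ : ℕ →₀ ℤ) (p : ℝ≥0∞) : MemLp (eChar γ) p μ :=
  (continuous_eChar γ).memLp_of_hasCompactSupport ((isClosed_tsupport _).isCompact)

lemma integral_eChar_ne (γ : ℕ →₀ ℤ) (hγ : γ ≠ 0) : ∫ w, eChar γ w ∂μ = 0 := by
  obtain ⟨n, hn⟩ : ∃ n, γ n ≠ 0 := by
    by_contra h
    push_neg at h
    exact hγ (Finsupp.ext h)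
  set g : ℕ → Circle := Function.update 1 n (Circle.exp (Real.pi / γ n)) with hg
  have hgval : eChar γ g = -1 := by
    have h1 : charFun γ g = Circle.exp (Real.pi / γ n) ^ (γ n) := by
      unfold charFun Finsupp.prod
      rw [Finset.prod_eq_single n]
      · simp only [g, Function.update_self]
      · intro b _ hb
        simp only [g, Function.update_of_ne hb, Pi.one_apply, one_zpow]
      · intro h; exact absurd (Finsupp.mem_support_iff.2 hn) h
    rw [eChar, h1, circle_coe_zpow, Circle.coe_exp]
    rw [← Complex.exp_int_mul]
    have : (γ n : ℂ) * (↑(Real.pi / (γ n : ℝ)) * Complex.I) = Real.pi * Complex.I := by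
      push_cast
      have : (γ n : ℂ) ≠ 0 := Int.cast_ne_zero.2 hn
      field_simp
    rw [this, Complex.exp_pi_mul_I]
  have key : ∫ w, eChar γ (g * w) ∂μ = ∫ w, eChar γ w ∂μ :=
    integral_mul_left_eq_self (eChar γ) g
  have key2 : ∫ w, eChar γ (g * w) ∂μ = - ∫ w, eChar γ w ∂μ := by
    have : ∀ w, eChar γ (g * w) = - eChar γ w := by
      intro w
      rw [eChar, charFun_mul, Circle.coe_mul,
        show ((charFun γ g : ℂ)) = -1 from hgval]
      simp [eChar]
    simp_rw [this]
    exact integral_neg _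
  rw [key2] at key
  have := neg_eq_self.mp key
  exact this

lemma integral_eChar (γ : ℕ →₀ ℤ) :
    ∫ w, eChar γ w ∂μ = if γ = 0 then 1 else 0 := by
  split_ifs with h
  · subst h
    simp [eChar, charFun_zero]
  · exact integral_eChar_ne μ γ h

noncomputable def charLp (γ : ℕ →₀ ℤ) : Lp ℂ 2 μ := (memℒp_eChar μ γ 2).toLp _

lemma inner_charLp (β γ : ℕ →₀ ℤ) :
    (inner ℂ (charLp μ β) (charLp μ γ) : ℂ) = if β = γ then 1 else 0 := by
  rw [L2.inner_def]
  have h1 : ∫ w, (inner ℂ (charLp μ β w) (charLp μ γ w) : ℂ) ∂μ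
      = ∫ w, (inner ℂ (eChar β w) (eChar γ w) : ℂ) ∂μ := by
    apply integral_congr_ae
    filter_upwards [MemLp.coeFn_toLp (memℒp_eChar μ β 2), MemLp.coeFn_toLp (memℒp_eChar μ γ 2)]
      with w hw1 hw2
    rw [show charLp μ β w = eChar β w from hw1, show charLp μ γ w = eChar γ w from hw2]
  rw [h1]
  have h2 : ∀ w, (inner ℂ (eChar β w) (eChar γ w) : ℂ) = eChar (γ - β) w := by
    intro w
    rw [RCLike.inner_apply, conj_eChar]
    show _ = ((charFun (γ - β) w : Circle) : ℂ)
    rw [charFun_sub, Circle.coe_mul]; rfl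
  simp_rw [h2]
  rw [integral_eChar μ (γ - β)]
  by_cases h : β = γ
  · subst h; simp
  · rw [if_neg h, if_neg fun hc => h (sub_eq_zero.mp hc).symm]

lemma orthonormal_charLp : Orthonormal ℂ (charLp μ) :=
  orthonormal_iff_ite.2 (inner_charLp μ)

lemma inner_charLp_toLp (f : (ℕ → Circle) → ℂ) (hf : MemLp f 2 μ) (γ : ℕ →₀ ℤ) :
    (inner ℂ (charLp μ γ) (hf.toLp f) : ℂ) = fourierCoeffInfty μ f γ := by
  rw [L2.inner_def, fourierCoeffInfty]
  apply integral_congr_ae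
  filter_upwards [MemLp.coeFn_toLp (memℒp_eChar μ γ 2), MemLp.coeFn_toLp hf] with w hw1 hw2
  rw [RCLike.inner_apply, show charLp μ γ w = eChar γ w from hw1,
    show (hf.toLp f : (ℕ → Circle) → ℂ) w = f w from hw2, conj_eChar, inv_charFun, mul_comm]

/-! ### The multinomial estimate -/

lemma map_toMultiset_prod {M : Type*} [CommMonoid M] (u : ℕ → M) (f : ℕ →₀ ℕ) :
    ((Finsupp.toMultiset f).map u).prod = f.prod fun n k => u n ^ k := by
  rw [Finsupp.toMultiset_map, Finsupp.prod_toMultiset]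
  exact Finsupp.prod_mapDomain_index (fun _ => pow_zero _) (fun a b₁ b₂ => pow_add _ _ _)

lemma tsum_pi_fin (u : ℕ → ℝ≥0∞) :
    ∀ m : ℕ, ∑' g : Fin m → ℕ, ∏ i, u (g i) = (∑' n, u n) ^ m := by
  intro m
  induction m with
  | zero =>
    rw [pow_zero]
    rw [tsum_eq_single (fun i => i.elim0) (fun b hb => absurd (Subsingleton.elim b _) hb)]
    simp
  | succ m ih =>
    rw [← Equiv.tsum_eq (Fin.consEquiv fun _ => ℕ) fun g : Fin (m+1) → ℕ => ∏ i, u (g i)]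
    have h : ∀ p : ℕ × (Fin m → ℕ),
        (∏ i, u (((Fin.consEquiv fun _ => ℕ) p) i)) = u p.1 * ∏ i, u (p.2 i) := by
      intro p
      rw [Fin.prod_univ_succ]
      simp [Fin.consEquiv]
    simp_rw [h]
    rw [ENNReal.tsum_prod']
    simp_rw [ENNReal.tsum_mul_left]
    rw [ENNReal.tsum_mul_right, ih, pow_succ, mul_comm]

variable {m : ℕ}

lemma length_sec_list (α : {α : ℕ →₀ ℕ // α.sum (fun _ k => k) = m}) :
    (Finsupp.toMultiset α.1).toList.length = m := by
  rw [Multiset.length_toList, Finsupp.card_toMultiset]; exact α.2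

noncomputable def sec (α : {α : ℕ →₀ ℕ // α.sum (fun _ k => k) = m}) : Fin m → ℕ :=
  fun i => (Finsupp.toMultiset α.1).toList.get (Fin.cast (length_sec_list α).symm i)

lemma sec_injective : Function.Injective (sec (m := m)) := by
  intro α β h
  have hl : (Finsupp.toMultiset α.1).toList = (Finsupp.toMultiset β.1).toList := by
    apply List.ext_get (by rw [length_sec_list, length_sec_list])
    intro i h1 h2
    have := congrFun h ⟨i, by rwa [← length_sec_list α]⟩
    simpa [sec] using this
  have hm : Finsupp.toMultiset α.1 = Finsupp.toMultiset β.1 := by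
    rw [← Multiset.coe_toList (Finsupp.toMultiset α.1), hl, Multiset.coe_toList]
  apply Subtype.ext
  ext n
  classical
  rw [← Finsupp.count_toMultiset, ← Finsupp.count_toMultiset, hm]

lemma prod_sec {M : Type*} [CommMonoid M] (u : ℕ → M)
    (α : {α : ℕ →₀ ℕ // α.sum (fun _ k => k) = m}) :
    ∏ i, u (sec α i) = α.1.prod fun n k => u n ^ k := by
  rw [← map_toMultiset_prod u α.1]
  set l := (Finsupp.toMultiset α.1).toList with hl
  have h1 : Finsupp.toMultiset α.1 = (l : Multiset ℕ) := (Multiset.coe_toList _).symm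
  rw [h1, Multiset.map_coe, Multiset.prod_coe]
  have h2 : l.map u = List.ofFn fun i => u (l.get i) := by
    conv_lhs => rw [← List.ofFn_get l]
    rw [List.map_ofFn]
    rfl
  rw [h2, List.prod_ofFn]
  exact (Fintype.prod_equiv (finCongr (length_sec_list α)) _ _ fun i => by simp [sec, l]).symm

lemma tsum_prod_le (u : ℕ → ℝ≥0∞) :
    ∑' α : {α : ℕ →₀ ℕ // α.sum (fun _ k => k) = m}, α.1.prod (fun n k => u n ^ k)
      ≤ (∑' n, u n) ^ m := by
  calc ∑' α : {α : ℕ →₀ ℕ // α.sum (fun _ k => k) = m}, α.1.prod (fun n k => u n ^ k)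
      = ∑' α : {α : ℕ →₀ ℕ // α.sum (fun _ k => k) = m}, ∏ i, u (sec α i) :=
        tsum_congr fun α => (prod_sec u α).symm
    _ ≤ ∑' g : Fin m → ℕ, ∏ i, u (g i) :=
        ENNReal.tsum_comp_le_tsum_of_injective sec_injective _
    _ = (∑' n, u n) ^ m := tsum_pi_fin u m

/-! ### Cauchy–Schwarz for tsums in `ℝ≥0∞` -/

lemma tsum_cauchy_schwarz {X : Type*} (a b : X → ℝ≥0∞) :
    ∑' x, a x * b x ≤ (∑' x, a x ^ 2) ^ (1/2 : ℝ) * (∑' x, b x ^ 2) ^ (1/2 : ℝ) := by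
  letI : MeasurableSpace X := ⊤
  haveI : MeasurableSingletonClass X := ⟨fun _ => trivial⟩
  have h := ENNReal.lintegral_mul_le_Lp_mul_Lq
    (MeasureTheory.Measure.count : MeasureTheory.Measure X)
    Real.HolderConjugate.two_two
    (measurable_from_top (f := a)).aemeasurable (measurable_from_top (f := b)).aemeasurable
  simp only [Pi.mul_apply, MeasureTheory.lintegral_count] at h
  calc ∑' x, a x * b x ≤ (∑' x, a x ^ (2:ℝ)) ^ (1/2 : ℝ) * (∑' x, b x ^ (2:ℝ)) ^ (1/2 : ℝ) := h
    _ = (∑' x, a x ^ 2) ^ (1/2 : ℝ) * (∑' x, b x ^ 2) ^ (1/2 : ℝ) := by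
        simp_rw [← ENNReal.rpow_natCast _ 2]
        norm_num

lemma rpow_half_pow {T : ℝ} (hT : 0 ≤ T) (m : ℕ) :
    (T ^ m) ^ (1/2 : ℝ) = Real.sqrt T ^ m := by
  rw [← Real.rpow_natCast T m, ← Real.rpow_mul hT, mul_comm, Real.rpow_mul hT,
    Real.rpow_natCast, Real.sqrt_eq_rpow]

end Stmt12

open scoped ENNReal NNReal in
set_option maxHeartbeats 2000000 in
/-- For every `m ≥ 1`, every `z ∈ ℓ₂` and every `f ∈ H₂^m(𝕋^∞)` (the
`m`-homogeneous part of the Hardy space), `∑_{|α|=m} |f̂(α) z^α| ≤ ‖z‖₂^m ‖f‖₂`;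
in particular `ℓ₂ ⊆ mon H₂^m(𝕋^∞)`. -/
theorem stmt_12 (m : ℕ) (hm : 1 ≤ m)
    (μ : Measure (ℕ → Circle)) [μ.IsHaarMeasure] [IsProbabilityMeasure μ]
    (z : ℕ → ℂ) (hz2 : Summable fun n => ‖z n‖ ^ 2)
    (f : (ℕ → Circle) → ℂ) (hf : MemLp f 2 μ)
    (hHm : ∀ α : ℕ →₀ ℤ, fourierCoeffInfty μ f α ≠ 0 →
      (∀ n, 0 ≤ α n) ∧ α.sum (fun _ k => k) = (m : ℤ)) :
    Summable (fun α : {α : ℕ →₀ ℕ // α.sum (fun _ k => k) = m} =>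
      ‖fourierCoeffInfty μ f ((α : ℕ →₀ ℕ).mapRange (fun k : ℕ => (k : ℤ)) rfl)
        * (α : ℕ →₀ ℕ).prod fun n k => z n ^ k‖)
    ∧ ∑' α : {α : ℕ →₀ ℕ // α.sum (fun _ k => k) = m},
        ‖fourierCoeffInfty μ f ((α : ℕ →₀ ℕ).mapRange (fun k : ℕ => (k : ℤ)) rfl)
          * (α : ℕ →₀ ℕ).prod fun n k => z n ^ k‖
      ≤ Real.sqrt (∑' n, ‖z n‖ ^ 2) ^ m * (eLpNorm f 2 μ).toReal := by
  classical
  set X := {α : ℕ →₀ ℕ // α.sum (fun _ k => k) = m} with hX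
  set ι : X → (ℕ →₀ ℤ) :=
    fun α => (α : ℕ →₀ ℕ).mapRange (fun k : ℕ => (k : ℤ)) rfl with hι_def
  have hι : Function.Injective ι := by
    intro α β h
    apply Subtype.ext; ext n
    have := congrArg (fun γ => γ n) h
    simpa [hι_def, Finsupp.mapRange_apply] using this
  set x : Lp ℂ 2 μ := hf.toLp f with hx
  -- Bessel's inequality
  have hcoef : ∀ γ : ℕ →₀ ℤ, ‖(inner ℂ (Stmt12.charLp μ γ) x : ℂ)‖
      = ‖fourierCoeffInfty μ f γ‖ := fun γ => by
    rw [Stmt12.inner_charLp_toLp μ f hf γ]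
  have hB1 : Summable fun γ : ℕ →₀ ℤ => ‖fourierCoeffInfty μ f γ‖ ^ 2 := by
    have := (Stmt12.orthonormal_charLp μ).inner_products_summable x
    simpa only [hcoef] using this
  have hB2 : ∑' γ : ℕ →₀ ℤ, ‖fourierCoeffInfty μ f γ‖ ^ 2 ≤ ‖x‖ ^ 2 := by
    have := (Stmt12.orthonormal_charLp μ).tsum_inner_products_le x
    simpa only [hcoef] using this
  have hS1 : Summable fun α : X => ‖fourierCoeffInfty μ f (ι α)‖ ^ 2 :=
    hB1.comp_injective hι
  have hS2 : ∑' α : X, ‖fourierCoeffInfty μ f (ι α)‖ ^ 2 ≤ ‖x‖ ^ 2 :=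
    (hS1.tsum_le_tsum_of_inj ι hι (fun _ _ => by positivity) (fun _ => le_rfl) hB1).trans hB2
  -- ENNReal quantities
  set A : X → ℝ≥0∞ := fun α => (‖fourierCoeffInfty μ f (ι α)‖₊ : ℝ≥0∞) with hA_def
  set B : X → ℝ≥0∞ :=
    fun α => (‖(α : ℕ →₀ ℕ).prod fun n k => z n ^ k‖₊ : ℝ≥0∞) with hB_def
  set T : ℝ := ∑' n, ‖z n‖ ^ 2 with hT_def
  have hT0 : 0 ≤ T := tsum_nonneg fun n => sq_nonneg _
  set u : ℕ → ℝ≥0∞ := fun n => ((‖z n‖₊ ^ 2 : ℝ≥0) : ℝ≥0∞) with hu_def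
  have hu : ∑' n, u n = ENNReal.ofReal T := by
    have h1 : ∀ n, u n = ENNReal.ofReal (‖z n‖ ^ 2) := fun n => by
      simp only [hu_def]
      rw [ENNReal.coe_pow, ← ENNReal.ofReal_coe_nnreal, coe_nnnorm,
        ← ENNReal.ofReal_pow (norm_nonneg _)]
    rw [tsum_congr h1, hT_def,
      ← ENNReal.ofReal_tsum_of_nonneg (fun n => sq_nonneg _) hz2]
  -- bound for the coefficients
  have hA : ∑' α : X, A α ^ 2 ≤ ENNReal.ofReal (‖x‖ ^ 2) := by
    have h1 : ∀ α : X, A α ^ 2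
        = ENNReal.ofReal (‖fourierCoeffInfty μ f (ι α)‖ ^ 2) := fun α => by
      simp only [hA_def]
      rw [← ENNReal.ofReal_coe_nnreal, coe_nnnorm,
        ← ENNReal.ofReal_pow (norm_nonneg _)]
    rw [tsum_congr h1, ← ENNReal.ofReal_tsum_of_nonneg (fun _ => sq_nonneg _) hS1]
    exact ENNReal.ofReal_le_ofReal hS2
  -- bound for the monomials
  have hB : ∑' α : X, B α ^ 2 ≤ ENNReal.ofReal T ^ m := by
    have h1 : ∀ α : X, B α ^ 2 = (α : ℕ →₀ ℕ).prod fun n k => u n ^ k := by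
      intro α
      have h2 : ‖(α : ℕ →₀ ℕ).prod fun n k => z n ^ k‖₊
          = (α : ℕ →₀ ℕ).prod fun n k => ‖z n‖₊ ^ k := by
        rw [show (‖(α : ℕ →₀ ℕ).prod fun n k => z n ^ k‖₊ : ℝ≥0)
            = nnnormHom ((α : ℕ →₀ ℕ).prod fun n k => z n ^ k) from rfl, map_finsuppProd]
        exact Finsupp.prod_congr fun n _ => by simp [nnnorm_pow]
      have h3 : (‖(α : ℕ →₀ ℕ).prod fun n k => z n ^ k‖₊ : ℝ≥0) ^ 2
          = (α : ℕ →₀ ℕ).prod fun n k => (‖z n‖₊ ^ 2) ^ k := by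
        rw [h2]
        unfold Finsupp.prod
        rw [← Finset.prod_pow]
        exact Finset.prod_congr rfl fun n _ => pow_right_comm _ _ _
      simp only [hB_def]
      rw [← ENNReal.coe_pow, h3,
        show (((α : ℕ →₀ ℕ).prod fun n k => (‖z n‖₊ ^ 2) ^ k : ℝ≥0) : ℝ≥0∞)
          = ENNReal.ofNNRealHom ((α : ℕ →₀ ℕ).prod fun n k => (‖z n‖₊ ^ 2) ^ k) from rfl,
        map_finsuppProd]
      exact Finsupp.prod_congr fun n _ => by rw [hu_def]; push_cast; rfl
    rw [tsum_congr h1, ← hu]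
    exact Stmt12.tsum_prod_le u
  -- Cauchy–Schwarz
  set R : ℝ≥0∞ := ENNReal.ofReal (‖x‖ ^ 2) ^ (1/2 : ℝ)
    * (ENNReal.ofReal T ^ m) ^ (1/2 : ℝ) with hR_def
  have hmain : ∑' α : X, A α * B α ≤ R :=
    (Stmt12.tsum_cauchy_schwarz A B).trans
      (mul_le_mul' (ENNReal.rpow_le_rpow hA (by norm_num))
        (ENNReal.rpow_le_rpow hB (by norm_num)))
  have hRne : R ≠ ⊤ := by
    rw [hR_def]
    exact ENNReal.mul_ne_top
      (ENNReal.rpow_ne_top_of_nonneg (by norm_num) ENNReal.ofReal_ne_top)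
      (ENNReal.rpow_ne_top_of_nonneg (by norm_num)
        (ENNReal.pow_ne_top ENNReal.ofReal_ne_top))
  have hRval : R.toReal = Real.sqrt T ^ m * (eLpNorm f 2 μ).toReal := by
    rw [hR_def, ENNReal.toReal_mul, ← ENNReal.toReal_rpow, ← ENNReal.toReal_rpow,
      ENNReal.toReal_pow, ENNReal.toReal_ofReal (sq_nonneg _), ENNReal.toReal_ofReal hT0,
      Stmt12.rpow_half_pow hT0 m]
    have hxnorm : (‖x‖ ^ 2) ^ (1/2 : ℝ) = ‖x‖ := by
      rw [← Real.rpow_natCast ‖x‖ 2, ← Real.rpow_mul (norm_nonneg x)]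
      norm_num
    rw [hxnorm, hx, Lp.norm_toLp f hf, mul_comm]
  have htne : ∑' α : X, A α * B α ≠ ⊤ := (hmain.trans_lt hRne.lt_top).ne
  have hterm : ∀ α : X,
      ‖fourierCoeffInfty μ f (ι α) * (α : ℕ →₀ ℕ).prod fun n k => z n ^ k‖
        = (A α * B α).toReal := by
    intro α
    simp only [hA_def, hB_def]
    rw [← ENNReal.coe_mul, ENNReal.coe_toReal, ← nnnorm_mul, coe_nnnorm]
  constructor
  · have hsummable := ENNReal.summable_toReal htne
    have : Summable fun α : X => (A α * B α).toReal := hsummable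
    exact this.congr fun α => (hterm α).symm
  · calc ∑' α : X,
        ‖fourierCoeffInfty μ f (ι α) * (α : ℕ →₀ ℕ).prod fun n k => z n ^ k‖
        = ∑' α : X, (A α * B α).toReal := tsum_congr hterm
      _ = (∑' α : X, A α * B α).toReal :=
          (ENNReal.tsum_toReal_eq fun α =>
            ENNReal.mul_ne_top ENNReal.coe_ne_top ENNReal.coe_ne_top).symm
      _ ≤ R.toReal := ENNReal.toReal_mono hRne hmain
      _ = Real.sqrt T ^ m * (eLpNorm f 2 μ).toReal := hRval
end

section
/- Let m ≥ 2, n ≥ 1, and p ≥ 1 with p ≤ m. For every tuple (i₁,…,i_{m−p}, j₁,…,j_p) with 1 ≤ i₁ ≤ ⋯ ≤ i_{m−p} and 1 ≤ j₁ ≤ ⋯ ≤ j_p, the cardinality |(𝐢,𝐣)| of the set of permutations of the concatenated m-tuple satisfies |(𝐢,𝐣)| ≤ m(m−1)⋯(m−p+1) · |𝐢|, where |𝐢| is the number of distinct permutations of the (m−p)-tuple 𝐢. -/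
noncomputable def numPerms {L : ℕ} (k : Fin L → ℕ) : ℕ :=
  Set.ncard {k' : Fin L → ℕ | ∃ σ : Equiv.Perm (Fin L), k' = k ∘ σ}

open MulAction

private lemma numPerms_eq_card_orbit {L : ℕ} (k : Fin L → ℕ) :
    numPerms k = Nat.card (orbit (Equiv.Perm (Fin L))ᵈᵐᵃ k) := by
  have hset : {k' : Fin L → ℕ | ∃ σ : Equiv.Perm (Fin L), k' = k ∘ σ}
      = orbit (Equiv.Perm (Fin L))ᵈᵐᵃ k := by
    ext k'
    simp only [Set.mem_setOf_eq, mem_orbit_iff]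
    constructor
    · rintro ⟨σ, rfl⟩; exact ⟨DomMulAct.mk σ, rfl⟩
    · rintro ⟨g, rfl⟩; exact ⟨DomMulAct.mk.symm g, rfl⟩
  rw [numPerms, hset]
  exact (Nat.card_coe_set_eq _).symm

private lemma orbit_stab {L : ℕ} (k : Fin L → ℕ) :
    numPerms k * Nat.card (stabilizer (Equiv.Perm (Fin L))ᵈᵐᵃ k) = L.factorial := by
  haveI : Fintype (Equiv.Perm (Fin L))ᵈᵐᵃ := Fintype.ofEquiv _ DomMulAct.mk
  haveI : Fintype (orbit (Equiv.Perm (Fin L))ᵈᵐᵃ k) := (Set.finite_range _).fintype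
  rw [numPerms_eq_card_orbit]
  rw [Nat.card_eq_fintype_card, Nat.card_eq_fintype_card,
    card_orbit_mul_card_stabilizer_eq_card_group]
  rw [show Fintype.card (Equiv.Perm (Fin L))ᵈᵐᵃ
      = Fintype.card (Equiv.Perm (Fin L)) from
      Fintype.card_congr DomMulAct.mk.symm,
    Fintype.card_perm, Fintype.card_fin]

/-- The stabilizer of `i` is at most as large as that of `Fin.append i j`. -/
private lemma stab_le {L p : ℕ} (i : Fin L → ℕ) (j : Fin p → ℕ) :
    Nat.card (stabilizer (Equiv.Perm (Fin L))ᵈᵐᵃ i)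
      ≤ Nat.card (stabilizer (Equiv.Perm (Fin (L + p)))ᵈᵐᵃ (Fin.append i j)) := by
  haveI : Finite (Equiv.Perm (Fin (L + p)))ᵈᵐᵃ := Finite.of_equiv _ DomMulAct.mk
  apply Nat.card_le_card_of_injective
    (fun (g : stabilizer (Equiv.Perm (Fin L))ᵈᵐᵃ i) =>
      (⟨DomMulAct.mk (finSumFinEquiv.permCongr
        (((DomMulAct.mk (M := Equiv.Perm (Fin L))).symm g.1).sumCongr
          (Equiv.refl (Fin p)))), by
      set σ := (DomMulAct.mk (M := Equiv.Perm (Fin L))).symm g.1 with hσ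
      have hg : i ∘ σ = i := by
        have h2 := g.2
        rw [mem_stabilizer_iff] at h2
        funext a
        calc i (σ a) = (g.1 • i) a := rfl
        _ = i a := by rw [h2]
      rw [mem_stabilizer_iff]
      funext x
      obtain ⟨s, rfl⟩ := finSumFinEquiv.surjective x
      show Fin.append i j (finSumFinEquiv.permCongr _ (finSumFinEquiv s))
        = Fin.append i j (finSumFinEquiv s)
      rw [Equiv.permCongr_apply, Equiv.symm_apply_apply]
      cases s with
      | inl a =>
        simp only [Equiv.sumCongr_apply, Sum.map_inl, finSumFinEquiv_apply_left,
          Fin.append_left]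
        exact congrFun hg a
      | inr a =>
        simp [Fin.append_right]⟩ :
      stabilizer (Equiv.Perm (Fin (L + p)))ᵈᵐᵃ (Fin.append i j)))
  intro g₁ g₂ h
  have h' := congrArg
    (fun x : stabilizer (Equiv.Perm (Fin (L + p)))ᵈᵐᵃ (Fin.append i j) =>
      (DomMulAct.mk (M := Equiv.Perm (Fin (L + p)))).symm x.1) h
  simp only [Equiv.symm_apply_apply] at h'
  have h2 : ∀ a, (DomMulAct.mk (M := Equiv.Perm (Fin L))).symm g₁.1 a
      = (DomMulAct.mk (M := Equiv.Perm (Fin L))).symm g₂.1 a := by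
    intro a
    have := congrArg (fun τ : Equiv.Perm (Fin (L + p)) =>
      τ (finSumFinEquiv (Sum.inl a))) h'
    simpa [Equiv.permCongr_apply] using this
  ext1
  exact (DomMulAct.mk (M := Equiv.Perm (Fin L))).symm.injective (Equiv.ext h2)

/-- For nondecreasing tuples `𝐢` (of length `m−p`) and `𝐣` (of length `p`) with
entries `≥ 1`, the number of distinct rearrangements of the concatenation `(𝐢,𝐣)`
satisfies `|(𝐢,𝐣)| ≤ m(m−1)⋯(m−p+1)·|𝐢|`. -/
theorem stmt_14 (m p : ℕ) (hm : 2 ≤ m) (hp1 : 1 ≤ p) (hpm : p ≤ m)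
    (i : Fin (m - p) → ℕ) (j : Fin p → ℕ)
    (hi1 : ∀ a, 1 ≤ i a) (hj1 : ∀ a, 1 ≤ j a)
    (hi : Monotone i) (hj : Monotone j) :
    numPerms (Fin.append i j) ≤ (∏ q ∈ Finset.range p, (m - q)) * numPerms i := by
  haveI : Finite (Equiv.Perm (Fin (m - p)))ᵈᵐᵃ := Finite.of_equiv _ DomMulAct.mk
  have hA := orbit_stab (Fin.append i j)
  have hB := orbit_stab i
  have hstab := stab_le i j
  set Sa := Nat.card (stabilizer (Equiv.Perm (Fin (m - p + p)))ᵈᵐᵃ (Fin.append i j))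
  set Sb := Nat.card (stabilizer (Equiv.Perm (Fin (m - p)))ᵈᵐᵃ i)
  have hSbpos : 0 < Sb := Nat.card_pos
  have hfac : (m - p).factorial * m.descFactorial p = m.factorial :=
    Nat.factorial_mul_descFactorial hpm
  have hLp : m - p + p = m := by omega
  have key : numPerms (Fin.append i j) * Sb ≤ (m.descFactorial p * numPerms i) * Sb := by
    calc numPerms (Fin.append i j) * Sb ≤ numPerms (Fin.append i j) * Sa :=
          Nat.mul_le_mul_left _ hstab
    _ = (m - p + p).factorial := hA
    _ = m.factorial := by rw [hLp]
    _ = (m - p).factorial * m.descFactorial p := hfac.symm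
    _ = (m.descFactorial p * numPerms i) * Sb := by rw [← hB]; ring
  rw [← Nat.descFactorial_eq_prod_range m p]
  exact Nat.le_of_mul_le_mul_right key hSbpos
end
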